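/- Every convex multiplicative system of positively weighted means is equal to the power mean M_p for some p ∈ [1,∞]; that is, if M is a system of positively weighted means that is convex and multiplicative, then there exists p ∈ [1,∞] such that M(w,x) = M_p(w,x) for every n ≥ 1, every w ∈ Δ_n° and every x ∈ (ℝ≥0)^n. -/

import Mathlib

open scoped NNReal ENNReal BigOperators

/-- The power mean `M_p` of order `p ∈ [0,∞]` with weights `w` and arguments `x`. -/
noncomputable def powerMean (p : ℝ≥0∞) {n : ℕ} (w x : Fin n → ℝ≥0) : ℝ≥0 :=
  if p = ∞ then (Finset.univ.filter (fun i => 0 < w i)).sup x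
  else if p = 0 then ∏ i, x i ^ ((w i : ℝ))
  else (∑ i, w i * x i ^ p.toReal) ^ (1 / p.toReal)

/-- A system of positively weighted means: for each `n`, a function
`M n : Δ_n° × ℝ≥0ⁿ → ℝ≥0` (the axioms are demanded only when `∑ w = 1` and all `w i > 0`),
satisfying functoriality for surjections, consistency and monotonicity. -/
structure PosMeanSystem where
  M : ∀ n : ℕ, (Fin n → ℝ≥0) → (Fin n → ℝ≥0) → ℝ≥0
  functorial : ∀ {m n : ℕ} (f : Fin m → Fin n), Function.Surjective f →
    ∀ (w : Fin m → ℝ≥0), (∑ i, w i) = 1 → (∀ i, 0 < w i) → ∀ x : Fin n → ℝ≥0,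
      M n (fun j => ∑ i ∈ Finset.univ.filter (fun i => f i = j), w i) x = M m w (x ∘ f)
  consistent : ∀ c : ℝ≥0, M 1 (fun _ => 1) (fun _ => c) = c
  mono : ∀ {n : ℕ} (w x y : Fin n → ℝ≥0), (∑ i, w i) = 1 → (∀ i, 0 < w i) →
    (∀ i, x i ≤ y i) → M n w x ≤ M n w y

/-- Multiplicativity of a system of positively weighted means, with respect to the fixed
bijection `finProdFinEquiv : Fin m × Fin n ≃ Fin (m * n)`. -/
def PosMeanSystem.IsMultiplicative (S : PosMeanSystem) : Prop :=
  ∀ {m n : ℕ} (w x : Fin m → ℝ≥0) (v y : Fin n → ℝ≥0),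
    (∑ i, w i) = 1 → (∀ i, 0 < w i) → (∑ j, v j) = 1 → (∀ j, 0 < v j) →
    S.M (m * n) (fun k => w (finProdFinEquiv.symm k).1 * v (finProdFinEquiv.symm k).2)
        (fun k => x (finProdFinEquiv.symm k).1 * y (finProdFinEquiv.symm k).2)
      = S.M m w x * S.M n v y

/-- Convexity of a system of positively weighted means. -/
def PosMeanSystem.IsConvex (S : PosMeanSystem) : Prop :=
  ∀ {n : ℕ} (w x y : Fin n → ℝ≥0), (∑ i, w i) = 1 → (∀ i, 0 < w i) →
    S.M n w (fun i => (x i + y i) / 2) ≤ max (S.M n w x) (S.M n w y)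

namespace PosMeanSystem

variable (S : PosMeanSystem)

lemma M_relabel {N N' : ℕ} (g : Fin N ≃ Fin N') (W X : Fin N' → ℝ≥0)
    (hW : ∑ i, W i = 1) (hpos : ∀ i, 0 < W i) :
    S.M N' W X = S.M N (W ∘ g) (X ∘ g) := by
  have hsum : ∑ i, (W ∘ g) i = 1 := by
    rw [← hW]; exact Fintype.sum_equiv g _ _ (fun i => rfl)
  have h := S.functorial g g.surjective (W ∘ g) hsum (fun i => hpos _) X
  have hw' : (fun j => ∑ i ∈ Finset.univ.filter (fun i => g i = j), (W ∘ g) i) = W := by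
    funext j
    have : Finset.univ.filter (fun i => g i = j) = {g.symm j} := by
      ext i
      simp [Equiv.apply_eq_iff_eq_symm_apply]
    rw [this, Finset.sum_singleton]
    simp
  rw [hw'] at h
  exact h

/-- The mean extended to an arbitrary finite index type. -/
noncomputable def MF {α : Type} [Fintype α] (w x : α → ℝ≥0) : ℝ≥0 :=
  S.M (Fintype.card α) (w ∘ (Fintype.equivFin α).symm) (x ∘ (Fintype.equivFin α).symm)

lemma MF_eq {α : Type} [Fintype α] {N : ℕ} (e : α ≃ Fin N) (w x : α → ℝ≥0)
    (hw : ∑ a, w a = 1) (hpos : ∀ a, 0 < w a) :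
    S.MF w x = S.M N (w ∘ e.symm) (x ∘ e.symm) := by
  have hsum : ∑ i, (w ∘ e.symm) i = 1 := by
    rw [← hw]; exact Fintype.sum_equiv e.symm _ _ (fun i => rfl)
  rw [MF, S.M_relabel ((Fintype.equivFin α).symm.trans e) (w ∘ e.symm) (x ∘ e.symm) hsum
    (fun i => hpos _)]
  congr 1 <;> funext i <;> simp

lemma MF_fin {n : ℕ} (w x : Fin n → ℝ≥0) (hw : ∑ a, w a = 1) (hpos : ∀ a, 0 < w a) :
    S.MF w x = S.M n w x := by
  rw [S.MF_eq (Equiv.refl (Fin n)) w x hw hpos]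
  congr 1

lemma MF_relabel {α β : Type} [Fintype α] [Fintype β] (e : β ≃ α) (w x : α → ℝ≥0)
    (hw : ∑ a, w a = 1) (hpos : ∀ a, 0 < w a) :
    S.MF (w ∘ e) (x ∘ e) = S.MF w x := by
  have h1 : ∑ b, (w ∘ e) b = 1 := by
    rw [← hw]; exact Fintype.sum_equiv e _ _ (fun b => rfl)
  rw [S.MF_eq (e.trans (Fintype.equivFin α)) (w ∘ e) (x ∘ e) h1 (fun b => hpos _), MF]
  congr 1 <;> funext i <;> simp

lemma MF_functorial {α β : Type} [Fintype α] [Fintype β] [DecidableEq β]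
    (f : α → β) (hf : Function.Surjective f) (w : α → ℝ≥0)
    (hw : ∑ a, w a = 1) (hpos : ∀ a, 0 < w a) (y : β → ℝ≥0) :
    S.MF (fun b => ∑ a ∈ Finset.univ.filter (fun a => f a = b), w a) y = S.MF w (y ∘ f) := by
  set eα := Fintype.equivFin α
  set eβ := Fintype.equivFin β
  set f' : Fin (Fintype.card α) → Fin (Fintype.card β) := fun i => eβ (f (eα.symm i)) with hf'
  have hsurj : Function.Surjective f' := by
    intro j
    obtain ⟨a, ha⟩ := hf (eβ.symm j)
    exact ⟨eα a, by simp [hf', ha]⟩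
  have hsum : ∑ i, (w ∘ eα.symm) i = 1 := by
    rw [← hw]; exact Fintype.sum_equiv eα.symm _ _ (fun i => rfl)
  have h := S.functorial f' hsurj (w ∘ eα.symm) hsum (fun i => hpos _) (y ∘ eβ.symm)
  have hL : (fun j => ∑ i ∈ Finset.univ.filter (fun i => f' i = j), (w ∘ eα.symm) i)
      = (fun b => ∑ a ∈ Finset.univ.filter (fun a => f a = b), w a) ∘ eβ.symm := by
    funext j
    simp only [Function.comp_apply, Finset.sum_filter]
    refine Fintype.sum_equiv eα.symm _ _ (fun i => ?_)
    have : f' i = j ↔ f (eα.symm i) = eβ.symm j := by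
      rw [hf']
      exact ⟨fun h => by simpa using congrArg eβ.symm h, fun h => by simp [h]⟩
    simp only [this]
  have hR : (y ∘ eβ.symm) ∘ f' = (y ∘ f) ∘ eα.symm := by
    funext i; simp [hf']
  rw [hL, hR] at h
  have hwpos : ∀ b, 0 < ∑ a ∈ Finset.univ.filter (fun a => f a = b), w a := by
    intro b
    obtain ⟨a, ha⟩ := hf b
    exact Finset.sum_pos' (fun _ _ => le_of_lt (hpos _))
      ⟨a, by simp [ha], hpos a⟩
  have hwsum : ∑ b, ∑ a ∈ Finset.univ.filter (fun a => f a = b), w a = 1 := by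
    rw [Finset.sum_fiberwise]; exact hw
  rw [S.MF_eq eβ _ y hwsum hwpos, S.MF_eq eα w (y ∘ f) hw hpos]
  exact h

lemma MF_mono {α : Type} [Fintype α] (w x y : α → ℝ≥0)
    (hw : ∑ a, w a = 1) (hpos : ∀ a, 0 < w a) (hxy : ∀ a, x a ≤ y a) :
    S.MF w x ≤ S.MF w y := by
  have hsum : ∑ i, (w ∘ (Fintype.equivFin α).symm) i = 1 := by
    rw [← hw]; exact Fintype.sum_equiv (Fintype.equivFin α).symm _ _ (fun i => rfl)
  exact S.mono _ _ _ hsum (fun i => hpos _) (fun i => hxy _)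

lemma MF_const {α : Type} [Fintype α] (w : α → ℝ≥0) (t : ℝ≥0)
    (hw : ∑ a, w a = 1) (hpos : ∀ a, 0 < w a) :
    S.MF w (fun _ => t) = t := by
  have hne : Nonempty α := by
    by_contra h
    rw [not_nonempty_iff] at h
    rw [Finset.univ_eq_empty, Finset.sum_empty] at hw
    exact one_ne_zero hw.symm
  have hf : Function.Surjective (fun _ : α => (0 : Fin 1)) := by
    intro j
    obtain ⟨a⟩ := hne
    exact ⟨a, Subsingleton.elim _ _⟩
  have h := S.MF_functorial (fun _ : α => (0 : Fin 1)) hf w hw hpos (fun _ => t)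
  have hw1 : (fun (b : Fin 1) => ∑ a ∈ Finset.univ.filter (fun a => (0 : Fin 1) = b), w a)
      = fun _ => (1 : ℝ≥0) := by
    funext b
    have : Finset.univ.filter (fun _ : α => (0 : Fin 1) = b) = Finset.univ := by
      ext a; simp [Subsingleton.elim (0 : Fin 1) b]
    rw [this, hw]
  rw [hw1] at h
  have h2 : S.MF (fun _ : Fin 1 => (1:ℝ≥0)) (fun _ => t) = t := by
    rw [S.MF_fin _ _ (by simp) (fun _ => one_pos)]
    exact S.consistent t
  rw [h2] at h
  exact h.symm

lemma MF_mul (hmul : S.IsMultiplicative) {α β : Type} [Fintype α] [Fintype β]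
    (w x : α → ℝ≥0) (v y : β → ℝ≥0)
    (hw : ∑ a, w a = 1) (hwpos : ∀ a, 0 < w a)
    (hv : ∑ b, v b = 1) (hvpos : ∀ b, 0 < v b) :
    S.MF (fun p : α × β => w p.1 * v p.2) (fun p => x p.1 * y p.2)
      = S.MF w x * S.MF v y := by
  set eα := Fintype.equivFin α
  set eβ := Fintype.equivFin β
  set e : α × β ≃ Fin (Fintype.card α * Fintype.card β) :=
    (eα.prodCongr eβ).trans finProdFinEquiv with he
  have hWsum : ∑ p : α × β, w p.1 * v p.2 = 1 := by
    rw [Fintype.sum_prod_type]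
    simp_rw [← Finset.mul_sum, hv, mul_one, hw]
  have hWpos : ∀ p : α × β, 0 < w p.1 * v p.2 := fun p => mul_pos (hwpos _) (hvpos _)
  rw [S.MF_eq e _ _ hWsum hWpos]
  have hsumw : ∑ i, (w ∘ eα.symm) i = 1 := by
    rw [← hw]; exact Fintype.sum_equiv eα.symm _ _ (fun i => rfl)
  have hsumv : ∑ i, (v ∘ eβ.symm) i = 1 := by
    rw [← hv]; exact Fintype.sum_equiv eβ.symm _ _ (fun i => rfl)
  have h := hmul (w ∘ eα.symm) (x ∘ eα.symm) (v ∘ eβ.symm) (y ∘ eβ.symm)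
    hsumw (fun i => hwpos _) hsumv (fun i => hvpos _)
  rw [S.MF_eq eα w x hw hwpos, S.MF_eq eβ v y hv hvpos, ← h]
  congr 1 <;> funext k <;> simp [he, Equiv.prodCongr]
lemma MF_smul (hmul : S.IsMultiplicative) {α : Type} [Fintype α] (w x : α → ℝ≥0) (a : ℝ≥0)
    (hw : ∑ i, w i = 1) (hpos : ∀ i, 0 < w i) :
    S.MF w (fun i => a * x i) = a * S.MF w x := by
  have h := S.MF_mul hmul w x (fun _ : Fin 1 => 1) (fun _ => a) hw hpos (by simp)
    (fun _ => one_pos)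
  have h1 : S.MF (fun _ : Fin 1 => (1:ℝ≥0)) (fun _ => a) = a := by
    rw [S.MF_fin _ _ (by simp) (fun _ => one_pos)]; exact S.consistent a
  rw [h1] at h
  have h2 := S.MF_relabel (α := α × Fin 1) (Equiv.prodUnique α (Fin 1)).symm
    (fun p => w p.1 * 1) (fun p => x p.1 * a)
    (by rw [Fintype.sum_prod_type]; simp [hw]) (fun p => by simpa using hpos p.1)
  rw [h] at h2
  have h3 : ((fun p : α × Fin 1 => w p.1 * 1) ∘ (Equiv.prodUnique α (Fin 1)).symm) = w := by
    funext i; simp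
  have h4 : ((fun p : α × Fin 1 => x p.1 * a) ∘ (Equiv.prodUnique α (Fin 1)).symm)
      = fun i => a * x i := by
    funext i; simp [mul_comm]
  rw [h3, h4] at h2
  rw [h2, mul_comm]
lemma MF_zero (hmul : S.IsMultiplicative) {α : Type} [Fintype α] (w : α → ℝ≥0)
    (hw : ∑ i, w i = 1) (hpos : ∀ i, 0 < w i) :
    S.MF w (fun _ => 0) = 0 := by
  have := S.MF_smul hmul w (fun _ => 0) 0 hw hpos
  simpa using this
lemma MF_convex (hconv : S.IsConvex) {α : Type} [Fintype α] (w x y : α → ℝ≥0)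
    (hw : ∑ i, w i = 1) (hpos : ∀ i, 0 < w i) :
    S.MF w (fun i => (x i + y i) / 2) ≤ max (S.MF w x) (S.MF w y) := by
  have hsum : ∑ i, (w ∘ (Fintype.equivFin α).symm) i = 1 := by
    rw [← hw]; exact Fintype.sum_equiv (Fintype.equivFin α).symm _ _ (fun i => rfl)
  exact hconv _ _ _ hsum (fun i => hpos _)
lemma MF_add_le (hconv : S.IsConvex) (hmul : S.IsMultiplicative) {α : Type} [Fintype α]
    (w u v : α → ℝ≥0) (hw : ∑ i, w i = 1) (hpos : ∀ i, 0 < w i) :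
    S.MF w (fun i => u i + v i) ≤ 2 * max (S.MF w u) (S.MF w v) := by
  have h1 : (fun i => u i + v i) = fun i => 2 * ((u i + v i) / 2) := by
    funext i
    rw [mul_div_cancel₀ _ (two_ne_zero)]
  rw [h1, S.MF_smul hmul w _ 2 hw hpos]
  exact mul_le_mul_right (S.MF_convex hconv w u v hw hpos) 2

/-- weight vector `(q, 1-q)` on `Fin 2`. -/
noncomputable def w2 (q : ℝ≥0) : Fin 2 → ℝ≥0 := fun j => if j = 0 then q else 1 - q

/-- indicator `(1,0)` on `Fin 2`. -/
noncomputable def ind2 : Fin 2 → ℝ≥0 := fun j => if j = 0 then 1 else 0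

lemma w2_sum {q : ℝ≥0} (hq : q ≤ 1) : ∑ j, w2 q j = 1 := by
  rw [Fin.sum_univ_two, w2]
  simp only [if_pos rfl, if_neg (by decide : (1 : Fin 2) ≠ 0)]
  exact add_tsub_cancel_of_le hq

lemma w2_pos {q : ℝ≥0} (h0 : 0 < q) (h1 : q < 1) : ∀ j, 0 < w2 q j := by
  intro j
  fin_cases j
  · simpa [w2] using h0
  · simp only [w2, Fin.mk_one, if_neg (by decide : (1 : Fin 2) ≠ 0)]
    exact tsub_pos_of_lt h1

/-- The basic two-point indicator mean `H(q) = M((q,1-q),(1,0))`. -/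
noncomputable def Hq (q : ℝ≥0) : ℝ≥0 := S.M 2 (w2 q) ind2

lemma Hq_eq_MF {q : ℝ≥0} (h0 : 0 < q) (h1 : q < 1) :
    S.Hq q = S.MF (w2 q) ind2 := by
  rw [S.MF_fin _ _ (w2_sum h1.le) (w2_pos h0 h1), Hq]

/-- Collapsing a mean along a surjection to `Fin 2`. -/
lemma collapse2 {α : Type} [Fintype α] [DecidableEq α] (f : α → Fin 2)
    (hf : Function.Surjective f) (W : α → ℝ≥0)
    (hw : ∑ a, W a = 1) (hpos : ∀ a, 0 < W a) (y : Fin 2 → ℝ≥0) :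
    S.MF W (y ∘ f) = S.M 2 (w2 (∑ a ∈ Finset.univ.filter (fun a => f a = 0), W a)) y := by
  rw [← S.MF_functorial f hf W hw hpos y]
  have hfsum : ∑ b : Fin 2, ∑ a ∈ Finset.univ.filter (fun a => f a = b), W a = 1 := by
    rw [Finset.sum_fiberwise]; exact hw
  have hfpos : ∀ b, 0 < ∑ a ∈ Finset.univ.filter (fun a => f a = b), W a := by
    intro b
    obtain ⟨a, ha⟩ := hf b
    exact Finset.sum_pos' (fun _ _ => le_of_lt (hpos _)) ⟨a, by simp [ha], hpos a⟩
  rw [S.MF_fin _ _ hfsum hfpos]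
  congr 1
  funext j
  rw [Fin.sum_univ_two] at hfsum
  fin_cases j
  · simp [w2]
  · simp only [w2, Fin.mk_one, if_neg (by decide : (1 : Fin 2) ≠ 0)]
    exact eq_tsub_of_add_eq (by rw [add_comm]; exact hfsum)

lemma Hq_le_one {q : ℝ≥0} (h0 : 0 < q) (h1 : q < 1) : S.Hq q ≤ 1 := by
  rw [S.Hq_eq_MF h0 h1]
  calc S.MF (w2 q) ind2 ≤ S.MF (w2 q) (fun _ => 1) := by
        refine S.MF_mono _ _ _ (w2_sum h1.le) (w2_pos h0 h1) (fun j => ?_)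
        rw [ind2]; split <;> simp
    _ = 1 := S.MF_const _ _ (w2_sum h1.le) (w2_pos h0 h1)

lemma Hq_mono {q q' : ℝ≥0} (h0 : 0 < q) (hqq : q ≤ q') (h1 : q' < 1) :
    S.Hq q ≤ S.Hq q' := by
  rcases eq_or_lt_of_le hqq with rfl | hlt
  · exact le_refl _
  -- three point argument
  have hq1 : q < 1 := lt_trans hlt h1
  set W : Fin 3 → ℝ≥0 := fun j => if j = 0 then q else if j = 1 then q' - q else 1 - q' with hW
  have hsum0 : q + ((q' - q) + (1 - q')) = 1 := by
    rw [← add_assoc, add_tsub_cancel_of_le hqq, add_tsub_cancel_of_le h1.le]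
  have hsum : ∑ j, W j = 1 := by
    rw [Fin.sum_univ_three, hW]
    simp only [if_pos rfl, if_neg (by decide : (1 : Fin 3) ≠ 0),
      if_neg (by decide : (2 : Fin 3) ≠ 0), if_pos rfl, if_neg (by decide : (2 : Fin 3) ≠ 1)]
    rw [add_assoc]
    exact hsum0
  have hpos : ∀ j, 0 < W j := by
    intro j
    fin_cases j
    · simpa [hW] using h0
    · simp only [hW, Fin.mk_one, if_neg (by decide : (1 : Fin 3) ≠ 0), if_pos rfl]
      exact tsub_pos_of_lt hlt
    · simp only [hW, if_neg (by decide : (2 : Fin 3) ≠ 0), if_neg (by decide : (2 : Fin 3) ≠ 1)]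
      exact tsub_pos_of_lt h1
  -- f collapses {1,2}, giving Hq q ; g collapses {0,1}, giving Hq q'
  set f : Fin 3 → Fin 2 := fun j => if j = 0 then 0 else 1 with hf
  set g : Fin 3 → Fin 2 := fun j => if j = 2 then 1 else 0 with hg
  have hfs : Function.Surjective f := by
    intro b; fin_cases b
    · exact ⟨0, by simp [hf]⟩
    · exact ⟨1, by simp [hf]⟩
  have hgs : Function.Surjective g := by
    intro b; fin_cases b
    · exact ⟨0, by simp [hg]⟩
    · exact ⟨2, by simp [hg]⟩
  have hcf := S.collapse2 f hfs W hsum hpos ind2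
  have hcg := S.collapse2 g hgs W hsum hpos ind2
  have hQf : (∑ a ∈ Finset.univ.filter (fun a => f a = 0), W a) = q := by
    have : Finset.univ.filter (fun a => f a = 0) = {(0 : Fin 3)} := by
      ext a; fin_cases a <;> simp [hf]
    rw [this, Finset.sum_singleton]; simp [hW]
  have hQg : (∑ a ∈ Finset.univ.filter (fun a => g a = 0), W a) = q' := by
    have : Finset.univ.filter (fun a => g a = 0) = {(0 : Fin 3), (1 : Fin 3)} := by
      ext a; fin_cases a <;> simp [hg]
    rw [this, Finset.sum_insert (by decide), Finset.sum_singleton]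
    simp only [hW, if_pos rfl, if_neg (by decide : (1 : Fin 3) ≠ 0), if_pos rfl]
    exact add_tsub_cancel_of_le hqq
  rw [hQf] at hcf
  rw [hQg] at hcg
  have hle : S.MF W (ind2 ∘ f) ≤ S.MF W (ind2 ∘ g) := by
    refine S.MF_mono _ _ _ hsum hpos (fun j => ?_)
    fin_cases j <;> simp [ind2, hf, hg]
  rw [hcf, hcg] at hle
  exact hle

lemma Hq_mult (hmul : S.IsMultiplicative) {q r : ℝ≥0}
    (hq0 : 0 < q) (hq1 : q < 1) (hr0 : 0 < r) (hr1 : r < 1) :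
    S.Hq (q * r) = S.Hq q * S.Hq r := by
  have h := S.MF_mul hmul (w2 q) ind2 (w2 r) ind2 (w2_sum hq1.le) (w2_pos hq0 hq1)
    (w2_sum hr1.le) (w2_pos hr0 hr1)
  rw [← S.Hq_eq_MF hq0 hq1, ← S.Hq_eq_MF hr0 hr1] at h
  set W : Fin 2 × Fin 2 → ℝ≥0 := fun p => w2 q p.1 * w2 r p.2 with hWdef
  have hWsum : ∑ p, W p = 1 := by
    rw [Fintype.sum_prod_type]
    simp_rw [hWdef, ← Finset.mul_sum, w2_sum hr1.le, mul_one, w2_sum hq1.le]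
  have hWpos : ∀ p, 0 < W p := fun p => mul_pos (w2_pos hq0 hq1 _) (w2_pos hr0 hr1 _)
  set f : Fin 2 × Fin 2 → Fin 2 := fun p => if p = (0, 0) then 0 else 1 with hfdef
  have hfs : Function.Surjective f := by
    intro b; fin_cases b
    · exact ⟨(0, 0), by simp [hfdef]⟩
    · exact ⟨(1, 1), by simp [hfdef]⟩
  have hind : (fun p : Fin 2 × Fin 2 => ind2 p.1 * ind2 p.2) = ind2 ∘ f := by
    funext p
    obtain ⟨p1, p2⟩ := p
    fin_cases p1 <;> fin_cases p2 <;> simp [ind2, hfdef]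
  rw [hind] at h
  rw [S.collapse2 f hfs W hWsum hWpos ind2] at h
  have hQ : (∑ a ∈ Finset.univ.filter (fun a => f a = 0), W a) = q * r := by
    have : Finset.univ.filter (fun a => f a = 0) = {((0 : Fin 2), (0 : Fin 2))} := by
      ext a
      obtain ⟨p1, p2⟩ := a
      fin_cases p1 <;> fin_cases p2 <;> simp [hfdef]
    rw [this, Finset.sum_singleton]
    simp [hWdef, w2]
  rw [hQ] at h
  rw [← h, Hq]

lemma Hq_pow (hmul : S.IsMultiplicative) {q : ℝ≥0} (h0 : 0 < q) (h1 : q < 1) :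
    ∀ n : ℕ, 1 ≤ n → S.Hq (q ^ n) = S.Hq q ^ n := by
  intro n
  induction n with
  | zero => omega
  | succ n ih =>
    intro _
    rcases Nat.eq_or_lt_of_le (Nat.one_le_iff_ne_zero.mpr (by omega) : 1 ≤ n + 1) with h | h
    · rw [← h]; simp
    · have hn : 1 ≤ n := by omega
      have hqn0 : 0 < q ^ n := pow_pos h0 n
      have hqn1 : q ^ n < 1 := pow_lt_one₀ (zero_le : (0:ℝ≥0) ≤ q) h1 (by omega)
      rw [pow_succ, pow_succ, ← ih hn, mul_comm (q ^ n) q, mul_comm (S.Hq (q ^ n)) (S.Hq q)]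
      exact S.Hq_mult hmul h0 h1 hqn0 hqn1

lemma half_lt_one : (1/2 : ℝ≥0) < 1 := by
  rw [div_lt_iff₀ (by norm_num)]; norm_num

lemma half_pos' : (0 : ℝ≥0) < 1/2 := by positivity

lemma half_add_half : (1/2 : ℝ≥0) + 1/2 = 1 := by
  rw [← NNReal.coe_inj]; push_cast; norm_num

lemma one_sub_half : (1 : ℝ≥0) - 1/2 = 1/2 := tsub_eq_of_eq_add half_add_half.symm

lemma one_sub_inv_two : (1 : ℝ≥0) - 2⁻¹ = 2⁻¹ := by
  rw [← one_div]; exact one_sub_half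

lemma Hq_half_ge (hconv : S.IsConvex) (hmul : S.IsMultiplicative) :
    (1/2 : ℝ≥0) ≤ S.Hq (1/2) := by
  set x : Fin 2 → ℝ≥0 := fun j => if j = 0 then 2 else 0 with hx
  set y : Fin 2 → ℝ≥0 := fun j => if j = 0 then 0 else 2 with hy
  have hsum := w2_sum half_lt_one.le
  have hpos := w2_pos half_pos' half_lt_one
  have hmid : (fun j => (x j + y j) / 2) = fun _ : Fin 2 => (1 : ℝ≥0) := by
    funext j
    fin_cases j <;> simp [hx, hy] <;> rw [NNReal.div_self two_ne_zero]
  have h1 := S.MF_convex hconv (w2 (1/2)) x y hsum hpos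
  rw [hmid, S.MF_const _ _ hsum hpos] at h1
  -- MF x = 2 * Hq (1/2)
  have hx2 : x = fun j => 2 * ind2 j := by
    funext j; fin_cases j <;> simp [hx, ind2]
  have hMx : S.MF (w2 (1/2)) x = 2 * S.Hq (1/2) := by
    rw [hx2, S.MF_smul hmul _ _ _ hsum hpos, ← S.Hq_eq_MF half_pos' half_lt_one]
  -- MF y = 2 * Hq (1/2) via swap
  have hy2 : y = fun j => 2 * (ind2 ∘ (Equiv.swap (0 : Fin 2) 1)) j := by
    funext j; fin_cases j <;> simp [hy, ind2, Equiv.swap_apply_left, Equiv.swap_apply_right]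
  have hw2swap : w2 (1/2) ∘ (Equiv.swap (0 : Fin 2) 1) = w2 (1/2) := by
    funext j
    fin_cases j <;>
      simp [w2, Equiv.swap_apply_left, Equiv.swap_apply_right, one_sub_inv_two, eq_comm]
  have hMy : S.MF (w2 (1/2)) y = 2 * S.Hq (1/2) := by
    rw [hy2, S.MF_smul hmul _ _ _ hsum hpos]
    congr 1
    have := S.MF_relabel (Equiv.swap (0 : Fin 2) 1) (w2 (1/2)) ind2 hsum hpos
    rw [hw2swap] at this
    rw [this, ← S.Hq_eq_MF half_pos' half_lt_one]
  rw [hMx, hMy, max_self] at h1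
  rw [div_le_iff₀ two_pos, mul_comm]
  exact h1

lemma Hq_pos (hconv : S.IsConvex) (hmul : S.IsMultiplicative) {q : ℝ≥0}
    (h0 : 0 < q) (h1 : q < 1) : 0 < S.Hq q := by
  obtain ⟨k, hk⟩ := exists_pow_lt_of_lt_one h0 half_lt_one
  have hk1 : 1 ≤ k + 1 := by omega
  have hpow0 : (0:ℝ≥0) < (1/2) ^ (k+1) := pow_pos half_pos' _
  have hpow1 : ((1/2:ℝ≥0)) ^ (k+1) < 1 := pow_lt_one₀ (zero_le) half_lt_one (by omega)
  have hle : (1/2:ℝ≥0) ^ (k+1) ≤ q := by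
    calc (1/2:ℝ≥0)^(k+1) ≤ (1/2)^k := pow_le_pow_of_le_one (zero_le) half_lt_one.le (by omega)
      _ ≤ q := hk.le
  calc (0:ℝ≥0) < (1/2)^(k+1) := hpow0
    _ ≤ S.Hq (1/2) ^ (k+1) := pow_le_pow_left₀ (zero_le) (S.Hq_half_ge hconv hmul) _
    _ = S.Hq ((1/2)^(k+1)) := (S.Hq_pow hmul half_pos' half_lt_one _ hk1).symm
    _ ≤ S.Hq q := S.Hq_mono hpow0 hle h1

/-- The exponent `c` with `H(q) = q ^ c`. -/
noncomputable def creal : ℝ := Real.logb (1/2) ((S.Hq (1/2) : ℝ))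

lemma Hq_half_rpow (hconv : S.IsConvex) (hmul : S.IsMultiplicative) :
    (1/2 : ℝ≥0) ^ S.creal = S.Hq (1/2) := by
  have hpos : (0:ℝ) < (S.Hq (1/2) : ℝ) := by
    exact_mod_cast S.Hq_pos hconv hmul half_pos' half_lt_one
  apply NNReal.coe_injective
  rw [NNReal.coe_rpow]
  have : ((1/2 : ℝ≥0) : ℝ) = (1/2 : ℝ) := by push_cast; norm_num
  rw [this, creal, Real.rpow_logb (by norm_num) (by norm_num) hpos]

lemma creal_nonneg (hconv : S.IsConvex) (hmul : S.IsMultiplicative) : 0 ≤ S.creal := by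
  rw [creal, Real.logb, div_nonneg_iff]
  right
  constructor
  · apply Real.log_nonpos
    · positivity
    · exact_mod_cast S.Hq_le_one half_pos' half_lt_one
  · apply le_of_lt
    apply Real.log_neg <;> norm_num

lemma creal_le_one (hconv : S.IsConvex) (hmul : S.IsMultiplicative) : S.creal ≤ 1 := by
  have hd : Real.log (1/2) < 0 := Real.log_neg (by norm_num) (by norm_num)
  rw [creal, Real.logb, div_le_iff_of_neg hd, one_mul]
  apply Real.log_le_log (by norm_num)
  exact_mod_cast S.Hq_half_ge hconv hmul

lemma Hq_rpow_rat (hconv : S.IsConvex) (hmul : S.IsMultiplicative) (u : ℚ) (hu : 0 < u) :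
    S.Hq ((1/2 : ℝ≥0) ^ (u : ℝ)) = S.Hq (1/2) ^ (u : ℝ) := by
  set a : ℕ := u.num.toNat with ha
  set b : ℕ := u.den with hb
  have ha1 : 1 ≤ a := by
    have := Rat.num_pos.mpr hu
    omega
  have hb1 : 1 ≤ b := u.pos
  have hbne : (b : ℝ) ≠ 0 := by positivity
  have hu' : (u : ℝ) = (a : ℝ) / b := by
    rw [ha, hb]
    rw [Rat.cast_def]
    congr 1
    have h := Int.toNat_of_nonneg (le_of_lt (Rat.num_pos.mpr hu))
    exact_mod_cast h.symm
  set s : ℝ≥0 := (1/2 : ℝ≥0) ^ ((1:ℝ)/b) with hs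
  have hs0 : 0 < s := NNReal.rpow_pos half_pos'
  have hs1 : s < 1 := by
    apply NNReal.rpow_lt_one half_lt_one
    positivity
  have hsb : s ^ (b : ℕ) = 1/2 := by
    rw [hs, ← NNReal.rpow_natCast (((1:ℝ≥0)/2) ^ ((1:ℝ)/b)) b, ← NNReal.rpow_mul,
      one_div_mul_cancel hbne, NNReal.rpow_one]
  have hHs : S.Hq s = S.Hq (1/2) ^ ((1:ℝ)/b) := by
    have h1 : S.Hq s ^ (b:ℕ) = S.Hq (1/2) := by
      rw [← S.Hq_pow hmul hs0 hs1 b hb1, hsb]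
    have h2 : S.Hq s = (S.Hq s ^ (b:ℕ)) ^ ((1:ℝ)/b) := by
      rw [← NNReal.rpow_natCast (S.Hq s) b, ← NNReal.rpow_mul, mul_one_div,
        div_self hbne, NNReal.rpow_one]
    rw [h2, h1]
  have hsa : s ^ (a : ℕ) = (1/2 : ℝ≥0) ^ (u : ℝ) := by
    rw [hs, ← NNReal.rpow_natCast (((1:ℝ≥0)/2) ^ ((1:ℝ)/b)) a, ← NNReal.rpow_mul, hu']
    congr 1
    field_simp
  rw [← hsa, S.Hq_pow hmul hs0 hs1 a ha1, hHs, ← NNReal.rpow_natCast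
    (S.Hq (1/2) ^ ((1:ℝ)/b)) a, ← NNReal.rpow_mul, hu']
  congr 1
  field_simp

lemma Hq_eq_rpow (hconv : S.IsConvex) (hmul : S.IsMultiplicative) {q : ℝ≥0}
    (h0 : 0 < q) (h1 : q < 1) : S.Hq q = q ^ S.creal := by
  have hhalfc := S.Hq_half_rpow hconv hmul
  rcases eq_or_lt_of_le (S.creal_nonneg hconv hmul) with hc0 | hc
  · -- creal = 0 : H is identically 1
    rw [← hc0, NNReal.rpow_zero]
    rw [← hc0, NNReal.rpow_zero] at hhalfc
    apply le_antisymm (S.Hq_le_one h0 h1)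
    obtain ⟨k, hk⟩ := exists_pow_lt_of_lt_one h0 half_lt_one
    have hk1 : 1 ≤ k + 1 := by omega
    have hpow0 : (0:ℝ≥0) < (1/2) ^ (k+1) := pow_pos half_pos' _
    have hle : (1/2:ℝ≥0) ^ (k+1) ≤ q := by
      calc (1/2:ℝ≥0)^(k+1) ≤ (1/2)^k :=
            pow_le_pow_of_le_one (zero_le) half_lt_one.le (by omega)
        _ ≤ q := hk.le
    calc (1:ℝ≥0) = S.Hq (1/2) ^ (k+1) := by rw [← hhalfc, one_pow]
      _ = S.Hq ((1/2)^(k+1)) := (S.Hq_pow hmul half_pos' half_lt_one _ hk1).symm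
      _ ≤ S.Hq q := S.Hq_mono hpow0 hle h1
  · -- creal > 0
    have hA0 : 0 < S.Hq q := S.Hq_pos hconv hmul h0 h1
    set c := S.creal with hcdef
    -- q as a power of 1/2
    set t : ℝ := Real.logb (1/2) (q : ℝ) with ht
    have hq2 : ((1/2 : ℝ≥0)) ^ t = q := by
      apply NNReal.coe_injective
      rw [NNReal.coe_rpow]
      have h12 : ((1/2 : ℝ≥0) : ℝ) = (1/2 : ℝ) := by push_cast; norm_num
      rw [h12, ht, Real.rpow_logb (by norm_num) (by norm_num) (by exact_mod_cast h0)]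
    have ht0 : 0 < t := by
      rw [ht, Real.logb, div_pos_iff]
      right
      constructor
      · apply Real.log_neg (by exact_mod_cast h0) (by exact_mod_cast h1)
      · apply Real.log_neg <;> norm_num
    set τ : ℝ := Real.logb (1/2) ((S.Hq q : ℝ)) with hτ
    have hA2 : ((1/2 : ℝ≥0)) ^ τ = S.Hq q := by
      apply NNReal.coe_injective
      rw [NNReal.coe_rpow]
      have h12 : ((1/2 : ℝ≥0) : ℝ) = (1/2 : ℝ) := by push_cast; norm_num
      rw [h12, hτ, Real.rpow_logb (by norm_num) (by norm_num) (by exact_mod_cast hA0)]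
    have hqc : q ^ c = (1/2 : ℝ≥0) ^ (t * c) := by
      rw [← hq2, ← NNReal.rpow_mul]
    -- key evaluation at rational exponents
    have hkey : ∀ u : ℚ, 0 < u → S.Hq ((1/2:ℝ≥0) ^ (u:ℝ)) = (1/2:ℝ≥0) ^ (c * u) := by
      intro u hu
      rw [S.Hq_rpow_rat hconv hmul u hu, ← hhalfc, ← NNReal.rpow_mul]
    have h2pos : (0:ℝ≥0) < 1/2 := half_pos'
    apply le_antisymm
    · -- Hq q ≤ q ^ c
      by_contra hcon
      push_neg at hcon
      -- q^c < Hq q, i.e. (1/2)^(t*c) < (1/2)^τ, so τ < t*c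
      rw [hqc, ← hA2] at hcon
      have hτlt : τ < t * c := by
        by_contra hge
        push_neg at hge
        exact absurd (NNReal.rpow_le_rpow_of_exponent_ge h2pos half_lt_one.le hge)
          (not_le.mpr hcon)
      have hdiv : τ / c < t := by
        rw [div_lt_iff₀ hc]
        calc τ < t * c := hτlt
          _ = t * c := rfl
      obtain ⟨u, hu1, hu2⟩ := exists_rat_btwn (max_lt hdiv ht0 : max (τ/c) 0 < t)
      have hu0 : 0 < u := by
        have := lt_of_le_of_lt (le_max_right (τ/c) 0) hu1
        exact_mod_cast this
      have huτ : τ < c * u := by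
        have h3 := lt_of_le_of_lt (le_max_left (τ/c) 0) hu1
        rw [div_lt_iff₀ hc] at h3
        calc τ < (u:ℝ) * c := h3
          _ = c * u := mul_comm _ _
      have hqu : q ≤ (1/2:ℝ≥0) ^ (u:ℝ) := by
        rw [← hq2]
        exact NNReal.rpow_le_rpow_of_exponent_ge h2pos half_lt_one.le hu2.le
      have hu1' : (1/2:ℝ≥0) ^ (u:ℝ) < 1 := by
        apply NNReal.rpow_lt_one half_lt_one
        exact_mod_cast hu0
      have : S.Hq q ≤ S.Hq ((1/2:ℝ≥0) ^ (u:ℝ)) := S.Hq_mono h0 hqu hu1'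
      rw [hkey u hu0] at this
      have hlt : (1/2:ℝ≥0) ^ (c * (u:ℝ)) < (1/2:ℝ≥0) ^ τ :=
        NNReal.rpow_lt_rpow_of_exponent_gt h2pos half_lt_one huτ
      rw [hA2] at hlt
      exact absurd (lt_of_le_of_lt this hlt) (lt_irrefl _)
    · -- q ^ c ≤ Hq q
      by_contra hcon
      push_neg at hcon
      rw [hqc, ← hA2] at hcon
      have hτgt : t * c < τ := by
        by_contra hge
        push_neg at hge
        exact absurd (NNReal.rpow_le_rpow_of_exponent_ge h2pos half_lt_one.le hge)
          (not_le.mpr hcon)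
      have hdiv : t < τ / c := by
        rw [lt_div_iff₀ hc]
        exact hτgt
      obtain ⟨u, hu1, hu2⟩ := exists_rat_btwn hdiv
      have hu0 : 0 < u := by exact_mod_cast lt_trans ht0 hu1
      have huτ : c * u < τ := by
        rw [lt_div_iff₀ hc] at hu2
        calc c * (u:ℝ) = (u:ℝ) * c := mul_comm _ _
          _ < τ := hu2
      have hqu : (1/2:ℝ≥0) ^ (u:ℝ) ≤ q := by
        rw [← hq2]
        exact NNReal.rpow_le_rpow_of_exponent_ge h2pos half_lt_one.le hu1.le
      have hupos : (0:ℝ≥0) < (1/2:ℝ≥0) ^ (u:ℝ) := NNReal.rpow_pos h2pos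
      have : S.Hq ((1/2:ℝ≥0) ^ (u:ℝ)) ≤ S.Hq q := S.Hq_mono hupos hqu h1
      rw [hkey u hu0] at this
      have hlt : (1/2:ℝ≥0) ^ τ < (1/2:ℝ≥0) ^ (c * (u:ℝ)) :=
        NNReal.rpow_lt_rpow_of_exponent_gt h2pos half_lt_one huτ
      rw [hA2] at hlt
      exact absurd (lt_of_lt_of_le hlt this) (lt_irrefl _)

/-- Evaluation of the mean on a "spike" (single-point indicator scaled by `a`). -/
lemma MF_spike (hconv : S.IsConvex) (hmul : S.IsMultiplicative)
    {α : Type} [Fintype α] [DecidableEq α] (W : α → ℝ≥0) (t₀ : α) (a : ℝ≥0)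
    (hw : ∑ i, W i = 1) (hpos : ∀ i, 0 < W i) :
    S.MF W (fun s => if s = t₀ then a else 0) = a * (W t₀) ^ S.creal := by
  by_cases hone : ∀ s : α, s = t₀
  · -- singleton case
    have hWt : W t₀ = 1 := by
      rw [← hw]
      rw [Finset.sum_eq_single t₀ (fun b _ hb => absurd (hone b) hb) (by simp)]
    have hfun : (fun s => if s = t₀ then a else 0) = fun _ : α => a := by
      funext s; rw [if_pos (hone s)]
    rw [hfun, S.MF_const _ _ hw hpos, hWt, NNReal.one_rpow, mul_one]
  · push_neg at hone
    obtain ⟨s', hs'⟩ := hone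
    set f : α → Fin 2 := fun s => if s = t₀ then 0 else 1 with hf
    have hfs : Function.Surjective f := by
      intro b; fin_cases b
      · exact ⟨t₀, by simp [hf]⟩
      · exact ⟨s', by simp [hf, hs']⟩
    have hcomp : (fun s => if s = t₀ then a else 0) = (fun j : Fin 2 => a * ind2 j) ∘ f := by
      funext s
      by_cases h : s = t₀ <;> simp [hf, h, ind2]
    rw [hcomp, S.collapse2 f hfs W hw hpos _]
    have hQ : (∑ b ∈ Finset.univ.filter (fun b => f b = 0), W b) = W t₀ := by
      have : Finset.univ.filter (fun b => f b = 0) = {t₀} := by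
        ext b
        by_cases h : b = t₀ <;> simp [hf, h]
      rw [this, Finset.sum_singleton]
    rw [hQ]
    -- W t₀ < 1
    have hWlt : W t₀ < 1 := by
      rw [← hw]
      have : W t₀ + ∑ b ∈ Finset.univ.erase t₀, W b = ∑ i, W i :=
        Finset.add_sum_erase _ _ (Finset.mem_univ t₀)
      rw [← this]
      have hpos' : 0 < ∑ b ∈ Finset.univ.erase t₀, W b :=
        Finset.sum_pos' (fun _ _ => le_of_lt (hpos _))
          ⟨s', Finset.mem_erase.mpr ⟨hs', Finset.mem_univ _⟩, hpos s'⟩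
      exact lt_add_of_pos_right _ hpos'
    have hsum2 : ∑ j, w2 (W t₀) j = 1 := w2_sum hWlt.le
    have hpos2 := w2_pos (hpos t₀) hWlt
    rw [← S.MF_fin (w2 (W t₀)) _ hsum2 hpos2, S.MF_smul hmul _ _ _ hsum2 hpos2,
      S.MF_fin _ _ hsum2 hpos2]
    have : S.M 2 (w2 (W t₀)) ind2 = S.Hq (W t₀) := rfl
    rw [this, S.Hq_eq_rpow hconv hmul (hpos t₀) hWlt]

/-- Sums of `2^k` functions are controlled by `2^k` times the max of means. -/
lemma MF_pow_sum_le (hconv : S.IsConvex) (hmul : S.IsMultiplicative)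
    {α : Type} [Fintype α] (W : α → ℝ≥0)
    (hw : ∑ i, W i = 1) (hpos : ∀ i, 0 < W i) :
    ∀ (k : ℕ) (u : ℕ → α → ℝ≥0),
      S.MF W (fun i => ∑ j ∈ Finset.range (2^k), u j i)
        ≤ 2^k * (Finset.range (2^k)).sup (fun j => S.MF W (u j)) := by
  intro k
  induction k with
  | zero =>
    intro u
    simp only [pow_zero, Finset.range_one, Finset.sum_singleton, Finset.sup_singleton, one_mul]
    exact le_refl _
  | succ k ih =>
    intro u
    have hsplit : ∀ i, ∑ j ∈ Finset.range (2^(k+1)), u j i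
        = ∑ j ∈ Finset.range (2^k), (u (2*j) i + u (2*j+1) i) := by
      intro i
      rw [pow_succ, mul_comm]
      induction (2^k) with
      | zero => simp
      | succ n ihn =>
        have e1 : 2*(n+1) = (2*n+1)+1 := by ring
        rw [e1, Finset.sum_range_succ, Finset.sum_range_succ, ihn, Finset.sum_range_succ]
        ring
    have h1 : S.MF W (fun i => ∑ j ∈ Finset.range (2^(k+1)), u j i)
        = S.MF W (fun i => ∑ j ∈ Finset.range (2^k), (u (2*j) i + u (2*j+1) i)) := by
      congr 1; funext i; exact hsplit i
    rw [h1]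
    have h2 := ih (fun j => fun i => u (2*j) i + u (2*j+1) i)
    refine le_trans h2 ?_
    rw [pow_succ, mul_assoc]
    apply mul_le_mul_right
    rw [Finset.sup_le_iff]
    intro j hj
    have h3 := S.MF_add_le hconv hmul W (u (2*j)) (u (2*j+1)) hw hpos
    refine le_trans h3 ?_
    apply mul_le_mul_right
    have hj1 : 2*j ∈ Finset.range (2^(k+1)) := by
      rw [Finset.mem_range] at hj ⊢
      rw [pow_succ]
      omega
    have hj2 : 2*j+1 ∈ Finset.range (2^(k+1)) := by
      rw [Finset.mem_range] at hj ⊢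
      rw [pow_succ]
      omega
    exact max_le (Finset.le_sup (f := fun j => S.MF W (u j)) hj1) (Finset.le_sup (f := fun j => S.MF W (u j)) hj2)

lemma nat_clog_bound (K : ℕ) (h : 0 < K) : 2 ^ (Nat.clog 2 K) ≤ 2 * K := by
  rcases Nat.lt_or_ge K 2 with h2 | h2
  · have hK1 : K = 1 := by omega
    subst hK1
    simp [Nat.clog]
  · have hcpos : 0 < Nat.clog 2 K := Nat.clog_pos one_lt_two h2
    have hlt := Nat.pow_pred_clog_lt_self one_lt_two (by omega : 1 < K)
    have hsucc : 2 ^ (Nat.clog 2 K) = 2 * 2 ^ (Nat.clog 2 K - 1) := by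
      rw [← pow_succ']
      congr 1
      omega
    have hpred : (Nat.clog 2 K).pred = Nat.clog 2 K - 1 := rfl
    rw [hpred] at hlt
    omega

lemma MF_spikes (hconv : S.IsConvex) (hmul : S.IsMultiplicative)
    {α : Type} [Fintype α] [DecidableEq α] (W V : α → ℝ≥0)
    (hw : ∑ i, W i = 1) (hpos : ∀ i, 0 < W i) :
    S.MF W V ≤ ((2 * Fintype.card α : ℕ) : ℝ≥0)
      * Finset.univ.sup (fun t => V t * (W t) ^ S.creal) := by
  set K := Fintype.card α with hK
  have hKpos : 0 < K := by
    rw [hK, Fintype.card_pos_iff]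
    by_contra h
    rw [not_nonempty_iff] at h
    rw [Finset.univ_eq_empty, Finset.sum_empty] at hw
    exact one_ne_zero hw.symm
  set g : Fin K → α := ⇑(Fintype.equivFin α).symm with hg
  set k := Nat.clog 2 K with hk
  have hK2 : K ≤ 2^k := Nat.le_pow_clog one_lt_two K
  have h2K : 2^k ≤ 2*K := nat_clog_bound K hKpos
  set u : ℕ → α → ℝ≥0 := fun j s => if h : j < K then (if s = g ⟨j, h⟩ then V s else 0) else 0
    with hu
  have hsum : ∀ s, ∑ j ∈ Finset.range (2^k), u j s = V s := by
    intro s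
    rw [← Finset.sum_subset (Finset.range_subset_range.mpr hK2)
      (fun j _ hj => by simp only [hu]; simp only [Finset.mem_range] at hj; rw [dif_neg hj])]
    rw [← Fin.sum_univ_eq_sum_range (fun j => u j s) K]
    have : ∀ j : Fin K, u j s = if s = g j then V s else 0 := by
      intro j
      simp only [hu]
      simp only [dif_pos j.isLt, Fin.eta]
    rw [Fintype.sum_congr _ _ this]
    rw [Fintype.sum_equiv (Fintype.equivFin α).symm _ (fun t => if s = t then V s else 0)
      (fun j => rfl)]
    rw [Finset.sum_ite_eq Finset.univ s (fun _ => V s)]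
    simp
  have h1 : S.MF W V = S.MF W (fun s => ∑ j ∈ Finset.range (2^k), u j s) := by
    congr 1; funext s; rw [hsum s]
  rw [h1]
  refine le_trans (S.MF_pow_sum_le hconv hmul W hw hpos k u) ?_
  have hsup : (Finset.range (2^k)).sup (fun j => S.MF W (u j))
      ≤ Finset.univ.sup (fun t => V t * (W t) ^ S.creal) := by
    rw [Finset.sup_le_iff]
    intro j _
    by_cases hj : j < K
    · have : u j = fun s => if s = g ⟨j, hj⟩ then V (g ⟨j, hj⟩) else 0 := by
        funext s
        simp only [hu]
        simp only [dif_pos hj]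
        by_cases h : s = g ⟨j, hj⟩
        · rw [if_pos h, if_pos h, h]
        · rw [if_neg h, if_neg h]
      rw [this, S.MF_spike hconv hmul W _ _ hw hpos]
      exact Finset.le_sup (f := fun t => V t * (W t) ^ S.creal) (Finset.mem_univ _)
    · have : u j = fun _ => 0 := by
        funext s; simp only [hu]; simp only [dif_neg hj]
      rw [this, S.MF_zero hmul W hw hpos]
      exact zero_le
  calc (2^k : ℝ≥0) * (Finset.range (2^k)).sup (fun j => S.MF W (u j))
      ≤ (2^k : ℝ≥0) * Finset.univ.sup (fun t => V t * (W t) ^ S.creal) :=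
        mul_le_mul_right hsup _
    _ ≤ ((2 * K : ℕ) : ℝ≥0) * Finset.univ.sup (fun t => V t * (W t) ^ S.creal) := by
        apply mul_le_mul_left
        have : ((2:ℝ≥0))^k = ((2^k : ℕ) : ℝ≥0) := by push_cast; ring
        rw [this]
        exact_mod_cast h2K

lemma tensor_sum {α : Type} [Fintype α] [DecidableEq α] (w : α → ℝ≥0)
    (hw : ∑ a, w a = 1) (N : ℕ) :
    ∑ σ : Fin N → α, ∏ k, w (σ k) = 1 := by
  have h := Finset.prod_univ_sum (fun _ : Fin N => (Finset.univ : Finset α))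
    (fun _ a => w a)
  rw [Fintype.piFinset_univ] at h
  rw [← h]
  simp [hw]

lemma MF_tensor (hmul : S.IsMultiplicative) {α : Type} [Fintype α] [DecidableEq α]
    (w x : α → ℝ≥0) (hw : ∑ a, w a = 1) (hpos : ∀ a, 0 < w a) (N : ℕ) :
    S.MF (fun σ : Fin N → α => ∏ k, w (σ k)) (fun σ => ∏ k, x (σ k))
      = (S.MF w x) ^ N := by
  induction N with
  | zero =>
    simp only [pow_zero]
    have h1 : (fun σ : Fin 0 → α => ∏ k, w (σ k)) = fun _ => 1 := by
      funext σ; simp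
    have h2 : (fun σ : Fin 0 → α => ∏ k, x (σ k)) = fun _ => 1 := by
      funext σ; simp
    rw [h1, h2]
    exact S.MF_const _ _ (by simp) (fun _ => one_pos)
  | succ N ih =>
    have hWsum : ∑ σ : Fin (N+1) → α, ∏ k, w (σ k) = 1 := tensor_sum w hw (N+1)
    have hWpos : ∀ σ : Fin (N+1) → α, 0 < ∏ k, w (σ k) :=
      fun σ => Finset.prod_pos (fun k _ => hpos _)
    set e : α × (Fin N → α) ≃ (Fin (N+1) → α) := Fin.consEquiv (fun _ => α) with he
    have hrel := S.MF_relabel e (fun σ : Fin (N+1) → α => ∏ k, w (σ k))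
      (fun σ => ∏ k, x (σ k)) hWsum hWpos
    have hcw : ((fun σ : Fin (N+1) → α => ∏ k, w (σ k)) ∘ e)
        = fun p : α × (Fin N → α) => w p.1 * ∏ k, w (p.2 k) := by
      funext p
      simp only [Function.comp_apply, he, Fin.consEquiv_apply]
      rw [Fin.prod_univ_succ]
      simp
    have hcx : ((fun σ : Fin (N+1) → α => ∏ k, x (σ k)) ∘ e)
        = fun p : α × (Fin N → α) => x p.1 * ∏ k, x (p.2 k) := by
      funext p
      simp only [Function.comp_apply, he, Fin.consEquiv_apply]
      rw [Fin.prod_univ_succ]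
      simp
    rw [hcw, hcx] at hrel
    rw [← hrel]
    rw [S.MF_mul hmul w x (fun τ : Fin N → α => ∏ k, w (τ k)) (fun τ => ∏ k, x (τ k))
      hw hpos (tensor_sum w hw N) (fun τ => Finset.prod_pos (fun k _ => hpos _))]
    rw [ih, pow_succ, mul_comm (S.MF w x ^ N) (S.MF w x)]

lemma le_of_pow_le_poly (a b : ℝ≥0) (m : ℕ)
    (h : ∀ N : ℕ, 1 ≤ N → a ^ N ≤ 2 * ((N+1 : ℕ) : ℝ≥0) ^ m * b ^ N) : a ≤ b := by
  by_contra hab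
  push_neg at hab
  have ha0 : 0 < a := lt_of_le_of_lt (zero_le : (0:ℝ≥0) ≤ b) hab
  rcases eq_or_lt_of_le (zero_le : (0:ℝ≥0) ≤ b) with hb0 | hb0
  · -- b = 0 : contradiction with N = 1
    have h1 := h 1 le_rfl
    rw [← hb0] at h1
    simp at h1
    exact absurd h1 (ne_of_gt ha0)
  set A : ℝ := (a : ℝ) with hA
  set B : ℝ := (b : ℝ) with hB
  have hBA : B < A := by exact_mod_cast hab
  have hA0 : 0 < A := by exact_mod_cast ha0
  have hB0 : 0 < B := by exact_mod_cast hb0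
  set ρ : ℝ := B / A with hρ
  have hρ0 : 0 < ρ := div_pos hB0 hA0
  have hρ1 : ρ < 1 := (div_lt_one hA0).mpr hBA
  have hkey : ∀ N : ℕ, 1 ≤ N → (1:ℝ) ≤ 2 * ((N:ℝ)+1) ^ m * ρ ^ N := by
    intro N hN
    have h1 : (a:ℝ) ^ N ≤ 2 * ((N+1:ℕ):ℝ) ^ m * (b:ℝ) ^ N := by
      exact_mod_cast h N hN
    have hAN : (0:ℝ) < A ^ N := pow_pos hA0 N
    rw [hρ, div_pow, ← mul_div_assoc, le_div_iff₀ hAN, one_mul]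
    push_cast at h1
    exact h1
  have hsum : Summable (fun n : ℕ => (n:ℝ) ^ m * ρ ^ n) := by
    apply summable_pow_mul_geometric_of_norm_lt_one
    rw [Real.norm_eq_abs, abs_of_nonneg hρ0.le]
    exact hρ1
  have htend := hsum.tendsto_atTop_zero
  have hev : ∀ᶠ n : ℕ in Filter.atTop, (n:ℝ) ^ m * ρ ^ n < ρ / 2 :=
    htend.eventually_lt_const (by positivity)
  obtain ⟨n₀, hn₀⟩ := Filter.eventually_atTop.mp hev
  set n := max n₀ 2 with hn
  have hn2 : 2 ≤ n := le_max_right _ _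
  have hfn := hn₀ n (le_max_left _ _)
  set N := n - 1 with hN
  have hN1 : 1 ≤ N := by omega
  have hnN : n = N + 1 := by omega
  rw [hnN] at hfn
  have hk := hkey N hN1
  push_cast at hfn
  have hexp : ((N:ℝ)+1) ^ m * ρ ^ (N+1) = (((N:ℝ)+1) ^ m * ρ ^ N) * ρ := by ring
  rw [hexp] at hfn
  nlinarith [pow_nonneg hρ0.le N, pow_nonneg (by positivity : (0:ℝ) ≤ (N:ℝ)+1) m]

lemma tensor_sum' {α : Type} [Fintype α] [DecidableEq α] (y : α → ℝ≥0) (N : ℕ) :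
    ∑ σ : Fin N → α, ∏ k, y (σ k) = (∑ a, y a) ^ N := by
  have h := Finset.prod_univ_sum (fun _ : Fin N => (Finset.univ : Finset α))
    (fun _ a => y a)
  rw [Fintype.piFinset_univ] at h
  rw [← h, Finset.prod_const, Finset.card_univ, Fintype.card_fin]

lemma rpow_pow_comm (z : ℝ≥0) (s : ℝ) (N : ℕ) : (z ^ s) ^ N = (z ^ N) ^ s := by
  rw [← NNReal.rpow_natCast (z ^ s) N, ← NNReal.rpow_mul, mul_comm, NNReal.rpow_mul,
    NNReal.rpow_natCast]

lemma M_eq_sup (hconv : S.IsConvex) (hmul : S.IsMultiplicative) (hc : S.creal = 0)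
    {n : ℕ} (w x : Fin n → ℝ≥0) (hw : ∑ i, w i = 1) (hpos : ∀ i, 0 < w i) :
    S.M n w x = Finset.univ.sup x := by
  rw [← S.MF_fin w x hw hpos]
  apply le_antisymm
  · calc S.MF w x ≤ S.MF w (fun _ => Finset.univ.sup x) :=
          S.MF_mono _ _ _ hw hpos (fun i => Finset.le_sup (Finset.mem_univ i))
      _ = Finset.univ.sup x := S.MF_const _ _ hw hpos
  · rw [Finset.sup_le_iff]
    intro i _
    have hspike := S.MF_spike hconv hmul w i (x i) hw hpos
    rw [hc, NNReal.rpow_zero, mul_one] at hspike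
    rw [← hspike]
    apply S.MF_mono _ _ _ hw hpos
    intro s
    by_cases h : s = i
    · rw [if_pos h, h]
    · rw [if_neg h]; exact zero_le

lemma M_eq_power (hconv : S.IsConvex) (hmul : S.IsMultiplicative) (hc : 0 < S.creal)
    {m : ℕ} (hm : 1 ≤ m) (w x : Fin m → ℝ≥0) (hw : ∑ i, w i = 1) (hpos : ∀ i, 0 < w i) :
    S.M m w x = (∑ i, w i * x i ^ ((1:ℝ)/S.creal)) ^ S.creal := by
  set c := S.creal with hcdef
  set r : ℝ := 1/c with hrdef
  have hr0 : 0 < r := by rw [hrdef]; positivity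
  have hcr : r * c = 1 := by rw [hrdef]; field_simp
  have hc1 : c ≤ 1 := S.creal_le_one hconv hmul
  set Sval : ℝ≥0 := ∑ i, w i * x i ^ r with hSval
  set A : ℝ≥0 := S.MF w x with hAdef
  set b : ℝ≥0 := Sval ^ c with hbdef
  have hMA : S.M m w x = A := (S.MF_fin w x hw hpos).symm
  rw [hMA]
  have key : ∀ N : ℕ, 1 ≤ N →
      A ^ N ≤ 2 * ((N+1:ℕ) : ℝ≥0) ^ m * b ^ N ∧
      b ^ N ≤ 2 * ((N+1:ℕ) : ℝ≥0) ^ m * A ^ N := by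
    intro N hN
    have hmne : Nonempty (Fin m) := ⟨⟨0, by omega⟩⟩
    set T : (Fin N → Fin m) → (Fin m → ℕ) :=
      fun σ i => (Finset.univ.filter (fun k => σ k = i)).card with hT
    set Types : Finset (Fin m → ℕ) := Finset.univ.image T with hTypes
    set W' : (Fin N → Fin m) → ℝ≥0 := fun σ => ∏ k, w (σ k) with hW'
    set X' : (Fin N → Fin m) → ℝ≥0 := fun σ => ∏ k, x (σ k) with hX'
    have hW'sum : ∑ σ, W' σ = 1 := by rw [hW', tensor_sum' w N, hw, one_pow]
    have hW'pos : ∀ σ, 0 < W' σ := fun σ => Finset.prod_pos (fun k _ => hpos _)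
    set q : (Fin N → Fin m) → {t // t ∈ Types} :=
      fun σ => ⟨T σ, Finset.mem_image_of_mem T (Finset.mem_univ σ)⟩ with hq
    have hqsurj : Function.Surjective q := by
      rintro ⟨t, ht⟩
      obtain ⟨σ, _, hσ⟩ := Finset.mem_image.mp ht
      exact ⟨σ, Subtype.ext hσ⟩
    set V : {t // t ∈ Types} → ℝ≥0 := fun t => ∏ i, x i ^ (t.1 i) with hV
    set P : {t // t ∈ Types} → ℝ≥0 :=
      fun t => ∑ σ ∈ Finset.univ.filter (fun σ => q σ = t), W' σ with hP
    have hXV : X' = V ∘ q := by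
      funext σ
      rw [hX', Function.comp_apply, hV, hq]
      dsimp only
      rw [← Finset.prod_fiberwise Finset.univ σ (fun k => x (σ k))]
      apply Finset.prod_congr rfl
      intro i _
      rw [Finset.prod_congr rfl (fun k hk => by
        rw [(Finset.mem_filter.mp hk).2] : ∀ k ∈ Finset.univ.filter (fun k => σ k = i),
          x (σ k) = x i), Finset.prod_const, hT]
    have h1 : ∑ t, P t = 1 := by
      rw [hP]
      dsimp only
      rw [Finset.sum_fiberwise]
      exact hW'sum
    have h2 : ∀ t, 0 < P t := by
      intro t
      obtain ⟨σ, hσ⟩ := hqsurj t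
      rw [hP]
      dsimp only
      exact Finset.sum_pos' (fun _ _ => le_of_lt (hW'pos _)) ⟨σ, by simp [hσ], hW'pos σ⟩
    have hmain : S.MF P V = A ^ N := by
      have hfunc := S.MF_functorial q hqsurj W' hW'sum hW'pos V
      rw [← hXV] at hfunc
      calc S.MF P V
          = S.MF (fun t => ∑ σ ∈ Finset.univ.filter (fun σ => q σ = t), W' σ) V := by rw [hP]
        _ = S.MF W' X' := hfunc
        _ = A ^ N := by
            rw [hAdef, ← S.MF_tensor hmul w x hw hpos N, hW', hX']
    have hsumid : ∑ t, (V t) ^ r * P t = Sval ^ N := by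
      have e1 : ∀ t : {t // t ∈ Types}, (V t)^r * P t
          = ∑ σ ∈ Finset.univ.filter (fun σ => q σ = t), (V (q σ))^r * W' σ := by
        intro t
        rw [hP]
        dsimp only
        rw [Finset.mul_sum]
        apply Finset.sum_congr rfl
        intro σ hσ
        rw [(Finset.mem_filter.mp hσ).2]
      rw [Finset.sum_congr rfl (fun t _ => e1 t), Finset.sum_fiberwise]
      have e2 : ∀ σ : Fin N → Fin m, (V (q σ))^r * W' σ = ∏ k, (x (σ k) ^ r * w (σ k)) := by
        intro σ
        have hVX : V (q σ) = X' σ := by rw [hXV]; rfl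
        rw [hVX, hX', hW', ← NNReal.finset_prod_rpow, ← Finset.prod_mul_distrib]
      rw [Finset.sum_congr rfl (fun σ _ => e2 σ), tensor_sum' (fun i => x i ^ r * w i) N,
        hSval]
      congr 1
      exact Finset.sum_congr rfl (fun i _ => mul_comm _ _)
    have hcard : Fintype.card {t // t ∈ Types} ≤ (N+1)^m := by
      rw [Fintype.card_coe]
      have hbound : ∀ t ∈ Types, ∀ i, t i ≤ N := by
        intro t ht i
        obtain ⟨σ, _, hσ⟩ := Finset.mem_image.mp ht
        rw [← hσ, hT]
        calc (Finset.univ.filter (fun k => σ k = i)).card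
            ≤ (Finset.univ : Finset (Fin N)).card := Finset.card_filter_le _ _
          _ = N := by rw [Finset.card_univ, Fintype.card_fin]
      have hinj := Finset.card_le_card_of_injOn
        (s := Types) (t := (Finset.univ : Finset (Fin m → Fin (N+1))))
        (fun t i => (⟨min (t i) N, Nat.lt_succ_of_le (min_le_right _ _)⟩ : Fin (N+1)))
        (fun _ _ => Finset.mem_univ _)
        (by
          intro t₁ h₁ t₂ h₂ heq
          funext i
          have hvi := congrArg Fin.val (congrFun heq i)
          simp only at hvi
          rwa [min_eq_left (hbound t₁ (Finset.mem_coe.mp h₁) i),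
            min_eq_left (hbound t₂ (Finset.mem_coe.mp h₂) i)] at hvi)
      calc Types.card ≤ _ := hinj
        _ = (N+1)^m := by
            rw [Finset.card_univ, Fintype.card_fun, Fintype.card_fin, Fintype.card_fin]
    have hKle : ((Fintype.card {t // t ∈ Types}) : ℝ≥0) ≤ ((N+1:ℕ) : ℝ≥0)^m := by
      have := (Nat.cast_le (α := ℝ≥0)).mpr hcard
      rwa [Nat.cast_pow] at this
    have hrpowid : ∀ u v : ℝ≥0, (u ^ r * v) ^ c = u * v ^ c := by
      intro u v
      rw [NNReal.mul_rpow, ← NNReal.rpow_mul, hcr, NNReal.rpow_one]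
    -- upper bound
    have hupper : A ^ N ≤ 2 * ((N+1:ℕ) : ℝ≥0) ^ m * b ^ N := by
      have hs := S.MF_spikes hconv hmul P V h1 h2
      have hsup : Finset.univ.sup (fun t => V t * P t ^ S.creal) ≤ b ^ N := by
        rw [Finset.sup_le_iff]
        intro t _
        have h4 : (V t)^r * P t ≤ Sval^N := by
          rw [← hsumid]
          exact Finset.single_le_sum (f := fun t => (V t)^r * P t) (fun _ _ => zero_le) (Finset.mem_univ t)
        calc V t * P t ^ S.creal = ((V t)^r * P t)^c := by rw [hrpowid, ← hcdef]
          _ ≤ (Sval^N)^c := NNReal.rpow_le_rpow h4 hc.le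
          _ = b^N := by rw [hbdef, rpow_pow_comm]
      calc A^N = S.MF P V := hmain.symm
        _ ≤ ((2 * Fintype.card {t // t ∈ Types} : ℕ) : ℝ≥0)
            * Finset.univ.sup (fun t => V t * P t ^ S.creal) := hs
        _ ≤ (2 * ((N+1:ℕ) : ℝ≥0)^m) * (b^N) := by
            apply mul_le_mul ?_ hsup (zero_le) (zero_le)
            rw [Nat.cast_mul, Nat.cast_ofNat]
            exact mul_le_mul_right hKle 2
        _ = 2 * ((N+1:ℕ) : ℝ≥0)^m * b^N := by ring
    -- lower bound
    have hlower : b ^ N ≤ 2 * ((N+1:ℕ) : ℝ≥0) ^ m * A ^ N := by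
      have hneT : Nonempty {t // t ∈ Types} := ⟨q (fun _ => Classical.arbitrary _)⟩
      obtain ⟨t₀, _, hmax⟩ := Finset.exists_max_image Finset.univ
        (fun t => (V t)^r * P t) Finset.univ_nonempty
      have hsl : Sval ^ N ≤ (Fintype.card {t // t ∈ Types} : ℝ≥0) * ((V t₀)^r * P t₀) := by
        rw [← hsumid]
        have := Finset.sum_le_card_nsmul Finset.univ (fun t => (V t)^r * P t)
          ((V t₀)^r * P t₀) (fun t _ => hmax t (Finset.mem_univ t))
        rwa [Finset.card_univ, nsmul_eq_mul] at this
      have hspike := S.MF_spike hconv hmul P t₀ (V t₀) h1 h2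
      have hVP : V t₀ * P t₀ ^ c ≤ A ^ N := by
        rw [← hmain, hcdef, ← hspike]
        apply S.MF_mono _ _ _ h1 h2
        intro s
        by_cases h : s = t₀
        · rw [if_pos h, h]
        · rw [if_neg h]; exact zero_le
      have hVP' : (V t₀)^r * P t₀ ≤ (A ^ N) ^ r := by
        calc (V t₀)^r * P t₀ = ((V t₀ * P t₀ ^ c)) ^ r := by
              rw [NNReal.mul_rpow, ← NNReal.rpow_mul, mul_comm c r, hcr, NNReal.rpow_one]
          _ ≤ (A^N)^r := NNReal.rpow_le_rpow hVP hr0.le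
      have h3 : Sval ^ N ≤ ((N+1:ℕ):ℝ≥0)^m * (A^N)^r :=
        le_trans hsl (mul_le_mul hKle hVP' (zero_le) (zero_le))
      have hone : (1:ℝ≥0) ≤ ((N+1:ℕ):ℝ≥0)^m := by
        apply one_le_pow_of_one_le'
        exact_mod_cast Nat.one_le_iff_ne_zero.mpr (by omega)
      calc b^N = (Sval^N)^c := by rw [hbdef, rpow_pow_comm]
        _ ≤ (((N+1:ℕ):ℝ≥0)^m * (A^N)^r)^c := NNReal.rpow_le_rpow h3 hc.le
        _ = (((N+1:ℕ):ℝ≥0)^m)^c * A^N := by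
            rw [NNReal.mul_rpow, ← NNReal.rpow_mul, hcr, NNReal.rpow_one]
        _ ≤ ((N+1:ℕ):ℝ≥0)^m * A^N := by
            apply mul_le_mul_left
            calc (((N+1:ℕ):ℝ≥0)^m)^c ≤ (((N+1:ℕ):ℝ≥0)^m)^(1:ℝ) :=
                  NNReal.rpow_le_rpow_of_exponent_le hone hc1
              _ = ((N+1:ℕ):ℝ≥0)^m := NNReal.rpow_one _
        _ ≤ 2 * ((N+1:ℕ):ℝ≥0)^m * A^N := by
            rw [mul_assoc]
            exact le_mul_of_one_le_left (zero_le) one_le_two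
    exact ⟨hupper, hlower⟩
  exact le_antisymm
    (le_of_pow_le_poly A b m (fun N hN => (key N hN).1))
    (le_of_pow_le_poly b A m (fun N hN => (key N hN).2))

end PosMeanSystem

/-- Every convex multiplicative system of positively weighted means is the power mean `M_p`
for some `p ∈ [1,∞]`. -/
theorem convex_multiplicative_posMeanSystem_eq_powerMean
    (S : PosMeanSystem) (hconv : S.IsConvex) (hmul : S.IsMultiplicative) :
    ∃ p : ℝ≥0∞, 1 ≤ p ∧ ∀ (n : ℕ), 1 ≤ n → ∀ (w x : Fin n → ℝ≥0),
      (∑ i, w i) = 1 → (∀ i, 0 < w i) → S.M n w x = powerMean p w x := by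
  rcases eq_or_lt_of_le (S.creal_nonneg hconv hmul) with hc0 | hc
  · refine ⟨∞, le_top, fun n hn w x hw hpos => ?_⟩
    rw [powerMean, if_pos rfl]
    have hfil : Finset.univ.filter (fun i => 0 < w i) = Finset.univ :=
      Finset.filter_true_of_mem (fun i _ => hpos i)
    rw [hfil]
    exact S.M_eq_sup hconv hmul hc0.symm w x hw hpos
  · refine ⟨ENNReal.ofReal (1/S.creal), ?_, fun n hn w x hw hpos => ?_⟩
    · rw [ENNReal.one_le_ofReal, le_div_iff₀ hc, one_mul]
      exact S.creal_le_one hconv hmul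
    · have hne : ENNReal.ofReal (1/S.creal) ≠ ∞ := ENNReal.ofReal_ne_top
      have hne0 : ENNReal.ofReal (1/S.creal) ≠ 0 :=
        (ENNReal.ofReal_pos.mpr (by positivity)).ne'
      rw [powerMean, if_neg hne, if_neg hne0, ENNReal.toReal_ofReal (by positivity),
        one_div_one_div]
      exact S.M_eq_power hconv hmul hc hn w x hw hpos
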